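/- arXiv:0910.4807 — 6 statements merged into one kernel-verified Lean document; each statement's English description precedes it below -/
import Mathlib

section
/- Let C be a conic with focus a and directrix L (focus-directrix definition with eccentricity e), let p be a point on C, let T be the tangent line to C at p, and suppose T meets L at a point l. Then the angle ∠pal is a right angle. -/
open EuclideanGeometry

lemma coord_dist_le (q r : EuclideanSpace ℝ (Fin 2)) : |q 1 - r 1| ≤ dist q r := by
  have h := abs_real_inner_le_norm (EuclideanSpace.single (1 : Fin 2) (1:ℝ)) (q - r)
  simpa [EuclideanSpace.inner_single_left, EuclideanSpace.norm_single, dist_eq_norm] using h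

lemma infDist_directrix (d : ℝ) (q : EuclideanSpace ℝ (Fin 2)) :
    Metric.infDist q {q : EuclideanSpace ℝ (Fin 2) | q 1 = -d} = |q 1 + d| := by
  set S : Set (EuclideanSpace ℝ (Fin 2)) := {q | q 1 = -d} with hS
  have hmem : (q + (-(q 1 + d)) • EuclideanSpace.single (1 : Fin 2) (1:ℝ)) ∈ S := by
    simp [S, EuclideanSpace.single_apply]
  apply le_antisymm
  · have h := Metric.infDist_le_dist_of_mem (x := q) hmem
    refine h.trans_eq ?_
    rw [dist_eq_norm]
    simp [norm_smul, EuclideanSpace.norm_single]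
    rw [show -d + -q 1 = -(q 1 + d) by ring, abs_neg]
  · by_contra hlt
    push_neg at hlt
    obtain ⟨r, hr, hrd⟩ := (Metric.infDist_lt_iff (Set.nonempty_of_mem hmem)).1 hlt
    have h1 : |q 1 + d| = |q 1 - r 1| := by
      rw [hS, Set.mem_setOf_eq] at hr; rw [hr]; ring_nf
    have := coord_dist_le q r
    linarith [h1 ▸ this]

/-- The tangent to a focus-directrix conic at a point `p` meets the directrix `L` at a
point `l` such that `∠ p a l` is a right angle.  The conic has focus `a` (not on `L`),
directrix `L = {q | q 1 = -d}`, eccentricity `e > 0`; the tangent at `p` is encoded by a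
differentiable curve `γ` lying in the conic with `γ t₀ = p` and nonzero velocity `w`;
`l` is the point where the tangent line `{p + s • w}` meets `L`. -/
theorem conic_tangent_meets_directrix_right_angle
    (e d : ℝ) (he : 0 < e) (hd : 0 < d)
    (a p l : EuclideanSpace ℝ (Fin 2)) (ha : a = 0) (hpa : p ≠ a)
    (γ : ℝ → EuclideanSpace ℝ (Fin 2)) (t₀ : ℝ) (w : EuclideanSpace ℝ (Fin 2))
    (hγp : γ t₀ = p) (hw : w ≠ 0) (hderiv : HasDerivAt γ w t₀)
    (hγ : ∀ t, dist (γ t) a =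
      e * Metric.infDist (γ t) {q : EuclideanSpace ℝ (Fin 2) | q 1 = -d})
    (hl₁ : ∃ s : ℝ, l = p + s • w)
    (hl₂ : l 1 = -d) :
    ∠ p a l = Real.pi / 2 := by
  subst ha
  obtain ⟨s, rfl⟩ := hl₁
  -- squared conic equation
  have h1 : ∀ t, ‖γ t‖ ^ 2 = e ^ 2 * (γ t 1 + d) ^ 2 := by
    intro t
    have := hγ t
    rw [dist_zero_right, infDist_directrix] at this
    rw [this]
    rw [mul_pow, sq_abs]
  -- derivative of LHS
  have hL : HasDerivAt (fun t => (inner ℝ (γ t) (γ t) : ℝ)) (inner ℝ (γ t₀) w + inner ℝ w (γ t₀)) t₀ :=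
    hderiv.inner ℝ hderiv
  -- derivative of coordinate
  have hc : HasDerivAt (fun t => γ t 1) (w 1) t₀ :=
    (EuclideanSpace.proj (1 : Fin 2) : EuclideanSpace ℝ (Fin 2) →L[ℝ] ℝ).hasFDerivAt.comp_hasDerivAt t₀ hderiv
  have hR : HasDerivAt (fun t => e ^ 2 * (γ t 1 + d) ^ 2)
      (e ^ 2 * (2 * (γ t₀ 1 + d) * w 1)) t₀ := by
    have := ((hc.add_const d).pow 2).const_mul (e ^ 2)
    simpa [mul_comm, mul_assoc, mul_left_comm] using this
  -- the two functions are equal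
  have hfun : (fun t => (inner ℝ (γ t) (γ t) : ℝ)) = fun t => e ^ 2 * (γ t 1 + d) ^ 2 := by
    funext t
    rw [real_inner_self_eq_norm_sq, h1 t]
  have hEq : (inner ℝ (γ t₀) w + inner ℝ w (γ t₀) : ℝ) = e ^ 2 * (2 * (γ t₀ 1 + d) * w 1) :=
    (hfun ▸ hL).unique hR
  rw [hγp, real_inner_comm w p] at hEq
  have hkey : (inner ℝ w p : ℝ) = e ^ 2 * ((p 1 + d) * w 1) := by linarith
  -- coordinate of l
  have hl : p 1 + s * w 1 = -d := by
    simpa [PiLp.add_apply, PiLp.smul_apply, smul_eq_mul] using hl₂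
  -- norm of p
  have hp2 : (inner ℝ p p : ℝ) = e ^ 2 * (p 1 + d) ^ 2 := by
    rw [real_inner_self_eq_norm_sq]
    simpa [hγp] using h1 t₀
  -- main inner product computation
  have hinner : (inner ℝ p (p + s • w) : ℝ) = 0 := by
    rw [inner_add_right, real_inner_smul_right, hp2, real_inner_comm w p, hkey]
    linear_combination e ^ 2 * (p 1 + d) * hl
  rw [EuclideanGeometry.angle, show (p + s • w) -ᵥ (0 : EuclideanSpace ℝ (Fin 2)) = p + s • w by simp,
    show p -ᵥ (0 : EuclideanSpace ℝ (Fin 2)) = p by simp]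
  exact InnerProductGeometry.inner_eq_zero_iff_angle_eq_pi_div_two _ _ |>.1 hinner
end

section
/- Let an ellipse have center C, semi-axes AC and BC. Let P be a point on the ellipse, DK the diameter through C parallel to the tangent at P, and F the foot of the perpendicular from P to line DK. Then PF·CK = AC·BC, where CK is the semi-diameter along DK. -/
set_option maxHeartbeats 1000000


/-- Conjugate-diameter lemma.  The ellipse has center `C = 0` and semi-axes
`AC, BC > 0`; `P` is a point on it.  The tangent at `P` is encoded by a differentiable
curve `γ` in the ellipse with `γ t₀ = P` and nonzero velocity `w`.  `K` is an endpoint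
of the diameter `DK` through the center parallel to the tangent at `P` (so `K` is on the
ellipse and on the line through `0` with direction `w`), and `PF` is the distance from
`P` to the line `DK`.  Then `PF · CK = AC · BC`. -/
theorem ellipse_conjugate_diameter_area
    (AC BC : ℝ) (hAC : 0 < AC) (hBC : 0 < BC)
    (P K : EuclideanSpace ℝ (Fin 2))
    (hP : (P 0 / AC) ^ 2 + (P 1 / BC) ^ 2 = 1)
    (γ : ℝ → EuclideanSpace ℝ (Fin 2)) (t₀ : ℝ) (w : EuclideanSpace ℝ (Fin 2))
    (hγp : γ t₀ = P) (hw : w ≠ 0) (hderiv : HasDerivAt γ w t₀)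
    (hγ : ∀ t, (γ t 0 / AC) ^ 2 + (γ t 1 / BC) ^ 2 = 1)
    (hK₁ : (K 0 / AC) ^ 2 + (K 1 / BC) ^ 2 = 1)
    (hK₂ : ∃ s : ℝ, K = s • w) :
    Metric.infDist P {q : EuclideanSpace ℝ (Fin 2) | ∃ s : ℝ, q = s • w} * dist (0 : EuclideanSpace ℝ (Fin 2)) K
      = AC * BC := by
  obtain ⟨s, hs⟩ := hK₂
  set p0 := P 0 with hp0
  set p1 := P 1 with hp1
  set w0 := w 0 with hw0
  set w1 := w 1 with hw1
  have hAC' : (AC : ℝ) ≠ 0 := ne_of_gt hAC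
  have hBC' : (BC : ℝ) ≠ 0 := ne_of_gt hBC
  -- w has nonzero norm-square
  have hwn : 0 < w0 ^ 2 + w1 ^ 2 := by
    rcases lt_or_eq_of_le (by positivity : (0:ℝ) ≤ w0 ^ 2 + w1 ^ 2) with h | h
    · exact h
    · exfalso; apply hw
      have h0 : w0 = 0 := by nlinarith [sq_nonneg w0, sq_nonneg w1]
      have h1 : w1 = 0 := by nlinarith [sq_nonneg w0, sq_nonneg w1]
      ext i
      fin_cases i <;> simpa [hw0, hw1] using ‹_›
  -- coordinate derivatives
  have h0 : HasDerivAt (fun t => γ t 0) w0 t₀ := by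
    simpa [Function.comp_def] using ((EuclideanSpace.proj (0 : Fin 2)).hasFDerivAt.comp_hasDerivAt t₀ hderiv)
  have h1 : HasDerivAt (fun t => γ t 1) w1 t₀ := by
    simpa [Function.comp_def] using ((EuclideanSpace.proj (1 : Fin 2)).hasFDerivAt.comp_hasDerivAt t₀ hderiv)
  -- conjugacy relation
  have hconj : p0 * w0 / AC ^ 2 + p1 * w1 / BC ^ 2 = 0 := by
    have hf : HasDerivAt (fun t => (γ t 0 / AC) ^ 2 + (γ t 1 / BC) ^ 2)
        (2 * (p0 / AC) ^ 1 * (w0 / AC) + 2 * (p1 / BC) ^ 1 * (w1 / BC)) t₀ := by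
      have := ((h0.div_const AC).pow 2).add ((h1.div_const BC).pow 2)
      simpa [hγp, hp0, hp1, Pi.add_def, Pi.pow_def] using this
    have hc : HasDerivAt (fun t => (γ t 0 / AC) ^ 2 + (γ t 1 / BC) ^ 2) 0 t₀ := by
      have : (fun t => (γ t 0 / AC) ^ 2 + (γ t 1 / BC) ^ 2) = fun _ => (1:ℝ) :=
        funext hγ
      rw [this]; exact hasDerivAt_const _ _
    have h2 := hf.unique hc
    field_simp at h2 ⊢
    linarith [h2]
  have hE : p0 ^ 2 * BC ^ 2 + p1 ^ 2 * AC ^ 2 = AC ^ 2 * BC ^ 2 := by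
    field_simp at hP; nlinarith [hP]
  have hC : p0 * w0 * BC ^ 2 + p1 * w1 * AC ^ 2 = 0 := by
    field_simp at hconj; nlinarith [hconj]
  have hKc : s ^ 2 * (w0 ^ 2 * BC ^ 2 + w1 ^ 2 * AC ^ 2) = AC ^ 2 * BC ^ 2 := by
    have hK0 : K 0 = s * w0 := by rw [hs]; simp [hw0]
    have hK1 : K 1 = s * w1 := by rw [hs]; simp [hw1]
    rw [hK0, hK1] at hK₁
    field_simp at hK₁; nlinarith [hK₁]
  -- the key algebraic identity
  have hkey : s ^ 2 * (p0 * w1 - p1 * w0) ^ 2 = AC ^ 2 * BC ^ 2 := by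
    have hlag : (p0 * w1 - p1 * w0) ^ 2 * (AC ^ 2 * BC ^ 2)
        = (p0 ^ 2 * BC ^ 2 + p1 ^ 2 * AC ^ 2) * (w0 ^ 2 * BC ^ 2 + w1 ^ 2 * AC ^ 2)
          - (p0 * w0 * BC ^ 2 + p1 * w1 * AC ^ 2) ^ 2 := by ring
    rw [hE, hC] at hlag
    have hab : 0 < AC ^ 2 * BC ^ 2 := by positivity
    have : (p0 * w1 - p1 * w0) ^ 2 = w0 ^ 2 * BC ^ 2 + w1 ^ 2 * AC ^ 2 := by
      have := hlag
      nlinarith [hab]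
    rw [this, hKc]
  -- infDist computation
  set S : Set (EuclideanSpace ℝ (Fin 2)) := {q | ∃ s : ℝ, q = s • w} with hS
  have hSne : S.Nonempty := ⟨0, 0, by simp⟩
  have hdistfor : ∀ c : ℝ, dist P (c • w) =
      Real.sqrt ((p0 - c * w0) ^ 2 + (p1 - c * w1) ^ 2) := by
    intro c
    rw [EuclideanSpace.dist_eq]
    congr 1
    rw [Fin.sum_univ_two]
    simp only [PiLp.smul_apply, smul_eq_mul, Real.dist_eq, sq_abs, ← hp0, ← hp1, ← hw0, ← hw1]
  have hinf : Metric.infDist P S = Real.sqrt ((p0 * w1 - p1 * w0) ^ 2 / (w0 ^ 2 + w1 ^ 2)) := by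
    apply le_antisymm
    · have hmem : ((p0 * w0 + p1 * w1) / (w0 ^ 2 + w1 ^ 2)) • w ∈ S :=
        ⟨(p0 * w0 + p1 * w1) / (w0 ^ 2 + w1 ^ 2), rfl⟩
      refine le_trans (Metric.infDist_le_dist_of_mem hmem) ?_
      rw [hdistfor]
      apply le_of_eq
      congr 1
      field_simp
      ring
    · refine le_of_not_gt fun hlt => ?_
      obtain ⟨q, ⟨c, rfl⟩, hq⟩ := (Metric.infDist_lt_iff hSne).1 hlt
      rw [hdistfor] at hq
      have hle : Real.sqrt ((p0 * w1 - p1 * w0) ^ 2 / (w0 ^ 2 + w1 ^ 2))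
          ≤ Real.sqrt ((p0 - c * w0) ^ 2 + (p1 - c * w1) ^ 2) := by
        apply Real.sqrt_le_sqrt
        rw [div_le_iff₀ hwn]
        nlinarith [sq_nonneg ((p0 - c * w0) * w0 + (p1 - c * w1) * w1)]
      linarith
  have hdist0K : dist (0 : EuclideanSpace ℝ (Fin 2)) K = |s| * Real.sqrt (w0 ^ 2 + w1 ^ 2) := by
    rw [dist_comm, dist_zero_right, hs, norm_smul, Real.norm_eq_abs,
      EuclideanSpace.norm_eq, Fin.sum_univ_two]
    simp [← hw0, ← hw1, sq_abs]
  rw [hinf, hdist0K, Real.sqrt_div (sq_nonneg _), Real.sqrt_sq_eq_abs]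
  have hsqrtwn : (0:ℝ) < Real.sqrt (w0 ^ 2 + w1 ^ 2) := Real.sqrt_pos.2 hwn
  have hsimp : |p0 * w1 - p1 * w0| / Real.sqrt (w0 ^ 2 + w1 ^ 2)
      * (|s| * Real.sqrt (w0 ^ 2 + w1 ^ 2)) = |p0 * w1 - p1 * w0| * |s| := by
    field_simp
  rw [hsimp]
  have h3 : (|p0 * w1 - p1 * w0| * |s|) ^ 2 = (AC * BC) ^ 2 := by
    rw [mul_pow, sq_abs, sq_abs]
    linear_combination hkey
  have hx : (0:ℝ) ≤ |p0 * w1 - p1 * w0| * |s| := by positivity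
  rw [← Real.sqrt_sq hx, h3, Real.sqrt_sq (by positivity)]
end

section
/- Let GCP be a diameter of an ellipse through its center C, v a point on segment GP, and Q a point on the ellipse with Qv parallel to the tangent at P. Let DCK be the diameter parallel to the tangent at P. Then (Gv·vP)/(Qv)² = (PC)²/(DC)², where DC is the semi-length of the conjugate diameter. -/
/-- Newton's lemma on conjugate diameters.  The ellipse has center `C = 0` and semi-axes
`A, B > 0`; `P` is on the ellipse and `G = -P` is its antipode, so `GCP` is a diameter.
The tangent at `P` is encoded by a differentiable curve `γ` in the ellipse with
`γ t₀ = P` and nonzero velocity `w`.  `v` lies on the segment `GP`, `Q` is a point of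
the ellipse with `Qv` parallel to the tangent at `P`, and `D` is an endpoint of the
diameter through the center parallel to the tangent at `P`.  Then
`(Gv · vP)/(Qv)² = (PC)²/(DC)²`. -/
theorem ellipse_conjugate_diameter_ratio
    (A B : ℝ) (hA : 0 < A) (hB : 0 < B)
    (P G v Q D : EuclideanSpace ℝ (Fin 2))
    (hP : (P 0 / A) ^ 2 + (P 1 / B) ^ 2 = 1)
    (hG : G = -P)
    (γ : ℝ → EuclideanSpace ℝ (Fin 2)) (t₀ : ℝ) (w : EuclideanSpace ℝ (Fin 2))
    (hγp : γ t₀ = P) (hw : w ≠ 0) (hderiv : HasDerivAt γ w t₀)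
    (hγ : ∀ t, (γ t 0 / A) ^ 2 + (γ t 1 / B) ^ 2 = 1)
    (hv : Wbtw ℝ G v P)
    (hQ₁ : (Q 0 / A) ^ 2 + (Q 1 / B) ^ 2 = 1)
    (hQ₂ : ∃ s : ℝ, Q - v = s • w) (hQv : Q ≠ v)
    (hD₁ : (D 0 / A) ^ 2 + (D 1 / B) ^ 2 = 1)
    (hD₂ : ∃ s : ℝ, D = s • w) :
    (dist G v * dist v P) / dist Q v ^ 2
      = dist P (0 : EuclideanSpace ℝ (Fin 2)) ^ 2 / dist D (0 : EuclideanSpace ℝ (Fin 2)) ^ 2 := by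
  -- component derivatives
  have hc0 : HasDerivAt (fun t => γ t 0) (w 0) t₀ := by
    have h := ((EuclideanSpace.proj (0 : Fin 2) : EuclideanSpace ℝ (Fin 2) →L[ℝ] ℝ).hasFDerivAt.comp t₀ hderiv.hasFDerivAt).hasDerivAt
    simpa [Function.comp_def] using h
  have hc1 : HasDerivAt (fun t => γ t 1) (w 1) t₀ := by
    have h := ((EuclideanSpace.proj (1 : Fin 2) : EuclideanSpace ℝ (Fin 2) →L[ℝ] ℝ).hasFDerivAt.comp t₀ hderiv.hasFDerivAt).hasDerivAt
    simpa [Function.comp_def] using h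
  have hf : HasDerivAt (fun t => (γ t 0 / A) ^ 2 + (γ t 1 / B) ^ 2)
      (2 * (P 0 / A) * (w 0 / A) + 2 * (P 1 / B) * (w 1 / B)) t₀ := by
    have h := ((hc0.div_const A).pow 2).add ((hc1.div_const B).pow 2)
    exact h.congr_deriv (by rw [hγp]; norm_num)
  have hconst : HasDerivAt (fun t => (γ t 0 / A) ^ 2 + (γ t 1 / B) ^ 2) 0 t₀ := by
    have h : (fun t => (γ t 0 / A) ^ 2 + (γ t 1 / B) ^ 2) = fun _ => (1 : ℝ) := funext hγ
    rw [h]; exact hasDerivAt_const _ _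
  have htan : (P 0 / A) * (w 0 / A) + (P 1 / B) * (w 1 / B) = 0 := by
    have := hf.unique hconst
    linarith
  -- v on the segment
  obtain ⟨t, ht, hvt⟩ := hv
  have hvP : v = (2 * t - 1) • P := by
    rw [← hvt, hG]
    simp only [AffineMap.lineMap_apply, vsub_eq_sub, vadd_eq_add, sub_neg_eq_add]
    module
  set c : ℝ := 2 * t - 1 with hc
  have hc1' : -1 ≤ c := by simp only [Set.mem_Icc] at ht; simp [hc]; linarith [ht.1]
  have hc2' : c ≤ 1 := by simp only [Set.mem_Icc] at ht; simp [hc]; linarith [ht.2]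
  obtain ⟨s, hsQ⟩ := hQ₂
  obtain ⟨r, hrD⟩ := hD₂
  have hv0 : v 0 = c * P 0 := by rw [hvP]; simp [PiLp.smul_apply]
  have hv1 : v 1 = c * P 1 := by rw [hvP]; simp [PiLp.smul_apply]
  have hQ0 : Q 0 = c * P 0 + s * w 0 := by
    have := congrArg (fun x : EuclideanSpace ℝ (Fin 2) => x 0) hsQ
    simp [PiLp.sub_apply, PiLp.smul_apply] at this
    rw [hv0] at this; linarith
  have hQ1c : Q 1 = c * P 1 + s * w 1 := by
    have := congrArg (fun x : EuclideanSpace ℝ (Fin 2) => x 1) hsQ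
    simp [PiLp.sub_apply, PiLp.smul_apply] at this
    rw [hv1] at this; linarith
  have hD0 : D 0 = r * w 0 := by
    have := congrArg (fun x : EuclideanSpace ℝ (Fin 2) => x 0) hrD
    simpa using this
  have hD1c : D 1 = r * w 1 := by
    have := congrArg (fun x : EuclideanSpace ℝ (Fin 2) => x 1) hrD
    simpa using this
  have hK : 0 < (w 0 / A) ^ 2 + (w 1 / B) ^ 2 := by
    have hwi : w 0 ≠ 0 ∨ w 1 ≠ 0 := by
      by_contra h
      push_neg at h
      exact hw (by ext i; fin_cases i <;> simp [h.1, h.2])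
    rcases hwi with h | h
    · exact add_pos_of_pos_of_nonneg (sq_pos_of_ne_zero (div_ne_zero h hA.ne')) (sq_nonneg _)
    · exact add_pos_of_nonneg_of_pos (sq_nonneg _) (sq_pos_of_ne_zero (div_ne_zero h hB.ne'))
  set K : ℝ := (w 0 / A) ^ 2 + (w 1 / B) ^ 2 with hKdef
  have hs2 : s ^ 2 * K = 1 - c ^ 2 := by
    have h := hQ₁
    rw [hQ0, hQ1c] at h
    rw [hKdef]
    linear_combination h - c ^ 2 * hP - 2 * c * s * htan
  have hr2 : r ^ 2 * K = 1 := by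
    have h := hD₁
    rw [hD0, hD1c] at h
    rw [hKdef]
    linear_combination h
  have hsne : s ≠ 0 := by
    intro h
    apply hQv
    have : Q - v = 0 := by rw [hsQ, h, zero_smul]
    exact sub_eq_zero.mp this
  have hrne : r ≠ 0 := by
    intro h
    rw [h] at hr2; simp at hr2
  have hwne : ‖w‖ ≠ 0 := norm_ne_zero_iff.mpr hw
  have hsr : s ^ 2 = (1 - c ^ 2) * r ^ 2 := by
    apply mul_right_cancel₀ hK.ne'
    linear_combination hs2 - (1 - c ^ 2) * hr2
  -- distances
  have hGv : dist G v = (1 + c) * ‖P‖ := by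
    rw [dist_eq_norm, hG, hvP]
    have h : -P - c • P = (-(1 + c)) • P := by module
    rw [h, norm_smul, Real.norm_eq_abs, abs_neg, abs_of_nonneg (by linarith)]
  have hvPd : dist v P = (1 - c) * ‖P‖ := by
    rw [dist_eq_norm, hvP]
    have h : c • P - P = (-(1 - c)) • P := by module
    rw [h, norm_smul, Real.norm_eq_abs, abs_neg, abs_of_nonneg (by linarith)]
  have hQvd : dist Q v = |s| * ‖w‖ := by
    rw [dist_eq_norm, hsQ, norm_smul, Real.norm_eq_abs]
  have hPd : dist P (0 : EuclideanSpace ℝ (Fin 2)) = ‖P‖ := dist_zero_right P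
  have hDd : dist D (0 : EuclideanSpace ℝ (Fin 2)) = |r| * ‖w‖ := by
    rw [dist_zero_right, hrD, norm_smul, Real.norm_eq_abs]
  rw [hGv, hvPd, hQvd, hPd, hDd]
  rw [mul_pow, mul_pow, sq_abs, sq_abs]
  have h1 : (0:ℝ) < s ^ 2 * ‖w‖ ^ 2 := by positivity
  have h2 : (0:ℝ) < r ^ 2 * ‖w‖ ^ 2 := by positivity
  rw [div_eq_div_iff h1.ne' h2.ne']
  linear_combination (-(‖P‖ ^ 2 * ‖w‖ ^ 2)) * hsr
end

section
/- Let v : ℝ → ℝ and suppose for each N the telescoping identity Σ_{i=1}^{N} (v(K_i)² − v(K_{i−1})²) = v(K_N)² − v(K_0)² holds; moreover 2·v(K_{i−1})(v(K_i) − v(K_{i−1})) = (v(K_i)² − v(K_{i−1})²) − (v(K_i) − v(K_{i−1}))². Conclude: for an orbit under a central acceleration m/r² directed at a fixed point S, the quantity v(r)² − 2m/r is conserved, i.e., v(r)² − 2m/r = v(r₀)² − 2m/r₀ for all attained r. -/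
/-- Conservation of energy for an inverse-square central force.  An object with
trajectory `γ` moves subject only to an acceleration of magnitude `m/r²` directed at
the fixed point `S`, where `r = dist(γ t, S)`: its velocity `g` satisfies
`g' t = (m / ‖S − γ t‖³) • (S − γ t)`.  Then the quantity `v² − 2m/r` is conserved:
`‖g t‖² − 2m/dist(γ t, S) = ‖g 0‖² − 2m/dist(γ 0, S)` for all `t`. -/
theorem inverse_square_energy_conservation
    (m : ℝ) (S : EuclideanSpace ℝ (Fin 2))
    (γ g : ℝ → EuclideanSpace ℝ (Fin 2))
    (hne : ∀ t, γ t ≠ S)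
    (hvel : ∀ t, HasDerivAt γ (g t) t)
    (hacc : ∀ t, HasDerivAt g ((m / ‖S - γ t‖ ^ 3) • (S - γ t)) t) :
    ∀ t : ℝ, ‖g t‖ ^ 2 - 2 * m / dist (γ t) S = ‖g 0‖ ^ 2 - 2 * m / dist (γ 0) S := by
  intro t
  set u : ℝ → EuclideanSpace ℝ (Fin 2) := fun t => γ t - S with hu
  have hu' : ∀ t, HasDerivAt u (g t) t := fun t => (hvel t).sub_const S
  have hune : ∀ t, u t ≠ 0 := fun t => sub_ne_zero.mpr (hne t)
  have hrpos : ∀ t, (0:ℝ) < ‖u t‖ := fun t => norm_pos_iff.mpr (hune t)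
  set E : ℝ → ℝ := fun t => (inner ℝ (g t) (g t) : ℝ) - 2 * m / ‖u t‖ with hE
  have hEderiv : ∀ t, HasDerivAt E 0 t := by
    intro t
    have hne' : (‖u t‖ : ℝ) ≠ 0 := (hrpos t).ne'
    -- derivative of kinetic part
    have h1 : HasDerivAt (fun s => (inner ℝ (g s) (g s) : ℝ))
        ((inner ℝ (g t) ((m / ‖S - γ t‖ ^ 3) • (S - γ t)) : ℝ)
          + inner ℝ ((m / ‖S - γ t‖ ^ 3) • (S - γ t)) (g t)) t :=
      (hacc t).inner ℝ (hacc t)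
    -- derivative of ‖u ·‖
    have hq : HasDerivAt (fun s => (inner ℝ (u s) (u s) : ℝ))
        ((inner ℝ (u t) (g t) : ℝ) + inner ℝ (g t) (u t)) t := (hu' t).inner ℝ (hu' t)
    have hqne : (inner ℝ (u t) (u t) : ℝ) ≠ 0 := by
      rw [real_inner_self_eq_norm_sq]; positivity
    have hn : HasDerivAt (fun s => Real.sqrt (inner ℝ (u s) (u s) : ℝ))
        (((inner ℝ (u t) (g t) : ℝ) + inner ℝ (g t) (u t))
          / (2 * Real.sqrt (inner ℝ (u t) (u t) : ℝ))) t := hq.sqrt hqne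
    have hsqrt : ∀ s, Real.sqrt (inner ℝ (u s) (u s) : ℝ) = ‖u s‖ := by
      intro s; rw [real_inner_self_eq_norm_sq, Real.sqrt_sq (norm_nonneg _)]
    have hn' : HasDerivAt (fun s => ‖u s‖)
        (((inner ℝ (u t) (g t) : ℝ) + inner ℝ (g t) (u t)) / (2 * ‖u t‖)) t := by
      simpa only [hsqrt] using hn
    have h2 : HasDerivAt (fun s => 2 * m / ‖u s‖)
        (2 * m * -(((inner ℝ (u t) (g t) : ℝ) + inner ℝ (g t) (u t)) / (2 * ‖u t‖)
          / ‖u t‖ ^ 2)) t := by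
      simpa [div_eq_mul_inv, mul_assoc] using
        ((hn'.inv hne').const_mul (2 * m))
    have := h1.sub h2
    convert this using 1
    · exact rfl
    · exact rfl
    · exact rfl
    have hSγ : S - γ t = -(u t) := by simp [hu]
    have hnormS : ‖S - γ t‖ = ‖u t‖ := by rw [hSγ, norm_neg]
    rw [hSγ, norm_neg, real_inner_smul_right, real_inner_smul_left,
      inner_neg_right, inner_neg_left, real_inner_comm (u t) (g t)]
    field_simp
    ring
  have hdiff : Differentiable ℝ E := fun s => (hEderiv s).differentiableAt
  have hconst : E t = E 0 :=
    is_const_of_deriv_eq_zero hdiff (fun s => (hEderiv s).deriv) t 0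
  have key : ∀ s, E s = ‖g s‖ ^ 2 - 2 * m / dist (γ s) S := by
    intro s
    rw [hE]
    simp only [real_inner_self_eq_norm_sq, dist_eq_norm, hu]
  rw [← key, ← key, hconst]
end

section
/- Suppose constants m > 0, Q > 0, C ∈ ℝ satisfy C = v₀² − 2m/r₀ and Q = v₀²r₀²·sin²α₀ for some r₀ > 0, v₀ > 0, α₀. Then QC + m² ≥ 0. Moreover QC + m² ≥ (r₀v₀² − m)² when sin²α₀ = 1, and in general if C < 0 then QC + m² ≥ (r₀v₀² − m)² ≥ 0. -/
/-- Nonnegativity of the discriminant `QC + m²` for the orbit constants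
`C = v₀² − 2m/r₀` and `Q = v₀²r₀²·sin²α₀`.  In particular `QC + m² ≥ 0` always, with
`QC + m² ≥ (r₀v₀² − m)²` when `sin²α₀ = 1`, and also whenever `C < 0`. -/
theorem orbit_discriminant_nonneg
    (m r₀ v₀ α₀ C Q : ℝ) (hm : 0 < m) (hr₀ : 0 < r₀) (hv₀ : 0 < v₀)
    (hC : C = v₀ ^ 2 - 2 * m / r₀)
    (hQ : Q = v₀ ^ 2 * r₀ ^ 2 * Real.sin α₀ ^ 2) :
    Q * C + m ^ 2 ≥ 0 ∧
    (Real.sin α₀ ^ 2 = 1 → Q * C + m ^ 2 ≥ (r₀ * v₀ ^ 2 - m) ^ 2) ∧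
    (C < 0 → Q * C + m ^ 2 ≥ (r₀ * v₀ ^ 2 - m) ^ 2 ∧ (r₀ * v₀ ^ 2 - m) ^ 2 ≥ 0) := by
  have hs : Real.sin α₀ ^ 2 ≤ 1 := Real.sin_sq_le_one α₀
  have hsn : 0 ≤ Real.sin α₀ ^ 2 := sq_nonneg _
  have hrC : r₀ * C = r₀ * v₀ ^ 2 - 2 * m := by
    rw [hC]; field_simp
  have key : Q * C + m ^ 2 = Real.sin α₀ ^ 2 * ((r₀ * v₀ ^ 2 - m) ^ 2 - m ^ 2) + m ^ 2 := by
    have : Q * C * r₀ = (v₀ ^ 2 * r₀ ^ 2 * Real.sin α₀ ^ 2) * (r₀ * v₀ ^ 2 - 2 * m) := by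
      rw [hQ]; linear_combination (v₀ ^ 2 * r₀ ^ 2 * Real.sin α₀ ^ 2) * hrC
    have hr' : r₀ ≠ 0 := ne_of_gt hr₀
    have : Q * C = v₀ ^ 2 * r₀ * Real.sin α₀ ^ 2 * (r₀ * v₀ ^ 2 - 2 * m) := by
      field_simp at this ⊢; nlinarith [this]
    rw [this]; ring
  refine ⟨?_, ?_, ?_⟩
  · rw [key]; nlinarith [sq_nonneg (r₀ * v₀ ^ 2 - m), sq_nonneg m]
  · intro h1; rw [key, h1]; ring_nf; exact le_refl _
  · intro hCneg
    constructor
    · have hr' : r₀ * C < 0 := mul_neg_of_pos_of_neg hr₀ hCneg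
      have hX : (r₀ * v₀ ^ 2 - m) ^ 2 ≤ m ^ 2 := by
        nlinarith [mul_pos hr₀ (pow_pos hv₀ 2)]
      rw [key]
      nlinarith [mul_nonneg (sub_nonneg.2 hs) (sub_nonneg.2 hX)]
    · exact sq_nonneg _
end

section
/- Suppose a planar orbit satisfies csc²α = (C/Q)r² + (2m/Q)r with Q = r₀²v₀²sin²α₀ > 0, C = v₀² − 2m/r₀, m > 0, and QC + m² > 0. Then there is a unique pair (e, d) with e > 0, d > 0 such that (e² − 1)/(e²d²) = C/Q and 2/(ed) = 2m/Q, namely e = √(QC + m²)/m and d = Q/√(QC + m²). Consequently the orbit equation coincides with that of the conic of eccentricity e and focus-directrix distance d. -/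
/-- Uniqueness of the conic matching the orbit equation
`csc²α = (C/Q)r² + (2m/Q)r`.  Given `m > 0`, `Q = r₀²v₀²sin²α₀ > 0`,
`C = v₀² − 2m/r₀` and `QC + m² > 0`, a pair `(e, d)` with `e, d > 0` satisfies
`(e² − 1)/(e²d²) = C/Q` and `2/(ed) = 2m/Q` if and only if
`e = √(QC + m²)/m` and `d = Q/√(QC + m²)`.  In particular there is exactly one such
pair, so the orbit equation coincides with the focus-directrix conic equation of
eccentricity `e` and focus-directrix distance `d`. -/
theorem orbit_conic_unique
    (m r₀ v₀ α₀ C Q : ℝ) (hm : 0 < m) (hr₀ : 0 < r₀) (hv₀ : 0 < v₀)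
    (hC : C = v₀ ^ 2 - 2 * m / r₀)
    (hQ : Q = r₀ ^ 2 * v₀ ^ 2 * Real.sin α₀ ^ 2) (hQpos : 0 < Q)
    (hdisc : 0 < Q * C + m ^ 2) :
    ∀ e d : ℝ,
      (0 < e ∧ 0 < d ∧
        (e ^ 2 - 1) / (e ^ 2 * d ^ 2) = C / Q ∧
        2 / (e * d) = 2 * m / Q)
      ↔ (e = Real.sqrt (Q * C + m ^ 2) / m ∧ d = Q / Real.sqrt (Q * C + m ^ 2)) := by
  intro e d
  set s := Real.sqrt (Q * C + m ^ 2) with hs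
  have hspos : 0 < s := Real.sqrt_pos.mpr hdisc
  have hs2 : s ^ 2 = Q * C + m ^ 2 := Real.sq_sqrt hdisc.le
  constructor
  · rintro ⟨he, hd, h1, h2⟩
    have hed : e * d * m = Q := by
      field_simp at h2
      linarith
    have he2 : e ^ 2 = s ^ 2 / m ^ 2 := by
      have h1' : (e ^ 2 - 1) * Q = C * (e ^ 2 * d ^ 2) := by
        field_simp at h1
        linarith [h1]
      have key : e ^ 2 * m ^ 2 * Q = (Q * C + m ^ 2) * Q := by
        linear_combination m ^ 2 * h1' + C * (e * d * m + Q) * hed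
      rw [hs2]
      field_simp
      exact mul_right_cancel₀ hQpos.ne' key
    have he' : e = s / m := by
      have h : e ^ 2 = (s / m) ^ 2 := by rw [he2]; ring
      have hsm : 0 < s / m := by positivity
      nlinarith
    refine ⟨he', ?_⟩
    rw [he'] at hed
    field_simp at hed
    field_simp
    linarith
  · rintro ⟨he, hd⟩
    have he' : 0 < e := by rw [he]; positivity
    have hd' : 0 < d := by rw [hd]; positivity
    refine ⟨he', hd', ?_, ?_⟩
    · rw [he, hd, div_eq_div_iff (by positivity) hQpos.ne']
      field_simp
      linear_combination hs2
    · rw [he, hd]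
      field_simp
end
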